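/- arXiv:1311.4042 — 6 statements merged into one kernel-verified Lean document; each statement's English description precedes it below -/
import Mathlib

section
/- Let p be a real number and define G1(a,b) = sqrt(a(a+b+1)(p-a)/(a+b)) when b is even, G1(a,b) = -sqrt(a(p-a)) when b is odd, G2(a,b) = sqrt(a+b+1) when b is even, and G2(a,b) = -sqrt((b+1)(p+b+1)/(a+b)) when b is odd. Then for all positive integers a and b with a ≤ p the recurrence G1(a,b)·G2(a+1,b-1)/sqrt(a+b+1) + G1(a,b-1)·G2(a,b-1)·sqrt(a+b-1)/(a+b) = 0 holds. -/
/-- Reduced matrix element `G1` for the `osp(3|2)` parastatistics Fock space of order `p`. -/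
noncomputable def G1 (p : ℝ) (a b : ℕ) : ℝ :=
  if Even b then Real.sqrt ((a : ℝ) * ((a : ℝ) + b + 1) * (p - a) / ((a : ℝ) + b))
  else -Real.sqrt ((a : ℝ) * (p - a))

/-- Reduced matrix element `G2` for the `osp(3|2)` parastatistics Fock space of order `p`. -/
noncomputable def G2 (p : ℝ) (a b : ℕ) : ℝ :=
  if Even b then Real.sqrt ((a : ℝ) + b + 1)
  else -Real.sqrt (((b : ℝ) + 1) * (p + b + 1) / ((a : ℝ) + b))

theorem stmt0 (p : ℝ) : ∀ a b : ℕ, 0 < a → 0 < b → (a : ℝ) ≤ p →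
    G1 p a b * G2 p (a + 1) (b - 1) / Real.sqrt ((a : ℝ) + b + 1)
      + G1 p a (b - 1) * G2 p a (b - 1) * Real.sqrt ((a : ℝ) + b - 1) / ((a : ℝ) + b) = 0 := by
  intro a b ha hb hp
  obtain ⟨n, rfl⟩ : ∃ n, b = n + 1 := ⟨b - 1, (Nat.succ_pred_eq_of_pos hb).symm⟩
  have ha1 : (1:ℝ) ≤ (a:ℝ) := by exact_mod_cast ha
  have hpa : (0:ℝ) ≤ p - a := by linarith
  have hA : (0:ℝ) ≤ (a:ℝ) * (p - a) := by positivity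
  have hs : (0:ℝ) < (a:ℝ) + n := by positivity
  rcases Nat.even_or_odd n with he | ho
  · simp only [G1, G2, Nat.add_sub_cancel, Nat.even_add_one, he, not_true, if_false, if_true]
    push_cast
    rw [show ((a:ℝ) + 1 + n + 1) = (a:ℝ) + (n + 1) + 1 from by ring,
        show ((a:ℝ) + (n + 1) - 1) = (a:ℝ) + n from by ring,
        mul_div_assoc, div_self (by positivity : Real.sqrt ((a:ℝ) + ((n:ℝ) + 1) + 1) ≠ 0), mul_one]
    have key : Real.sqrt ((a:ℝ) * ((a:ℝ) + n + 1) * (p - a) / ((a:ℝ) + n)) * Real.sqrt ((a:ℝ) + n + 1)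
        * Real.sqrt ((a:ℝ) + n) = Real.sqrt ((a:ℝ) * (p - a)) * ((a:ℝ) + n + 1) := by
      rw [← Real.sqrt_mul (by positivity), ← Real.sqrt_mul (by positivity),
          show (a:ℝ) * ((a:ℝ) + n + 1) * (p - a) / ((a:ℝ) + n) * ((a:ℝ) + n + 1) * ((a:ℝ) + n)
            = ((a:ℝ) * (p - a)) * ((a:ℝ) + n + 1) ^ 2 from by field_simp,
          Real.sqrt_mul hA, Real.sqrt_sq (by positivity)]
    rw [key, show ((a:ℝ) + ((n:ℝ) + 1)) = (a:ℝ) + n + 1 from by ring,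
        mul_div_assoc, div_self (by positivity), mul_one]
    ring
  · simp only [G1, G2, Nat.add_sub_cancel, Nat.even_add_one, Nat.not_even_iff_odd.mpr ho,
      not_false_iff, if_true, if_false]
    push_cast
    have hB : (0:ℝ) ≤ ((n:ℝ) + 1) * (p + n + 1) := by nlinarith
    rw [show ((a:ℝ) + 1 + n) = (a:ℝ) + n + 1 from by ring,
        show ((a:ℝ) + (n + 1) + 1) = (a:ℝ) + n + 2 from by ring,
        show ((a:ℝ) + (n + 1) - 1) = (a:ℝ) + n from by ring,
        show ((a:ℝ) + ((n:ℝ) + 1)) = (a:ℝ) + n + 1 from by ring]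
    rw [show (a:ℝ) * ((a:ℝ) + n + 2) * (p - a) / ((a:ℝ) + n + 1)
          = ((a:ℝ) * (p - a)) * ((a:ℝ) + n + 2) / ((a:ℝ) + n + 1) from by ring,
        Real.sqrt_div (by positivity) , Real.sqrt_mul hA,
        Real.sqrt_div hB ((a:ℝ) + n + 1), Real.sqrt_div hB ((a:ℝ) + n)]
    have h1 : Real.sqrt ((a:ℝ) + n) ≠ 0 := by positivity
    have h2 : Real.sqrt ((a:ℝ) + n + 1) ≠ 0 := by positivity
    have h3 : Real.sqrt ((a:ℝ) + n + 2) ≠ 0 := by positivity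
    have h4 : ((a:ℝ) + n + 1) ≠ 0 := by positivity
    field_simp
    ring_nf
    rw [Real.sq_sqrt (by positivity)]
    ring
end

section
/- Let p be a real number with p ≥ a+1 and define G1, G2 as the piecewise functions: G1(a,b) = sqrt(a(a+b+1)(p-a)/(a+b)) for b even, G1(a,b) = -sqrt(a(p-a)) for b odd, G2(a,b) = sqrt(a+b+1) for b even, G2(a,b) = -sqrt((b+1)(p+b+1)/(a+b)) for b odd. Then for all positive integers a, b: G1(a,b)²/(a+b+1) + ((a+b-1)/(a+b))·G2(a,b-1)² + ((a+b)/(a+b+1))·G2(a,b)² = p + 2b. -/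
theorem stmt1 (p : ℝ) : ∀ a b : ℕ, 0 < a → 0 < b → (a : ℝ) + 1 ≤ p →
    G1 p a b ^ 2 / ((a : ℝ) + b + 1)
      + (((a : ℝ) + b - 1) / ((a : ℝ) + b)) * G2 p a (b - 1) ^ 2
      + (((a : ℝ) + b) / ((a : ℝ) + b + 1)) * G2 p a b ^ 2 = p + 2 * b := by
  intro a b ha hb hp
  obtain ⟨k, rfl⟩ : ∃ k, b = k + 1 := ⟨b - 1, (Nat.succ_pred_eq_of_pos hb).symm⟩
  have hA : (1:ℝ) ≤ (a:ℝ) := by exact_mod_cast ha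
  have hpa : (0:ℝ) ≤ p - a := by linarith
  have hK : (0:ℝ) ≤ (k:ℝ) := Nat.cast_nonneg k
  have hak : (0:ℝ) < (a:ℝ) + k := by linarith
  have hab : (0:ℝ) < (a:ℝ) + (k + 1) := by linarith
  have hab2 : (0:ℝ) < (a:ℝ) + (k + 1) + 1 := by linarith
  simp only [G1, G2, Nat.add_sub_cancel]
  push_cast
  rcases Nat.even_or_odd (k + 1) with he | ho
  · have hk' : ¬ Even k := by simpa [Nat.even_add_one] using he
    rw [if_pos he, if_neg hk', if_pos he,
      Real.sq_sqrt (div_nonneg (mul_nonneg (mul_nonneg (by linarith) (by linarith)) hpa)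
        hab.le),
      neg_sq,
      Real.sq_sqrt (div_nonneg (mul_nonneg (by linarith) (by linarith)) hak.le),
      Real.sq_sqrt (by linarith)]
    field_simp
    ring
  · have he' : ¬ Even (k + 1) := by simpa using ho
    have hk' : Even k := by simpa [Nat.even_add_one] using he'
    rw [if_neg he', if_pos hk', if_neg he',
      neg_sq, Real.sq_sqrt (mul_nonneg (by linarith) hpa),
      Real.sq_sqrt (by linarith : (0:ℝ) ≤ (a:ℝ) + k + 1),
      neg_sq,
      Real.sq_sqrt (div_nonneg (mul_nonneg (by linarith) (by linarith)) hab.le)]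
    field_simp
    ring
end

section
/- With G1, G2 defined piecewise by parity of the second argument as: G1(a,b) = sqrt(a(a+b+1)(p-a)/(a+b)) for b even, G1(a,b) = -sqrt(a(p-a)) for b odd, G2(a,b) = sqrt(a+b+1) for b even, G2(a,b) = -sqrt((b+1)(p+b+1)/(a+b)) for b odd, and p ≥ a, for all positive integers a, b we have G1(a-1,b)²/(a+b) + G2(a,b-1)² + G2(a,b)² = p + 2b + 2. -/
theorem stmt2 (p : ℝ) : ∀ a b : ℕ, 0 < a → 0 < b → (a : ℝ) ≤ p →
    G1 p (a - 1) b ^ 2 / ((a : ℝ) + b)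
      + G2 p a (b - 1) ^ 2 + G2 p a b ^ 2 = p + 2 * b + 2 := by
  intro a b ha hb hp
  have ha1 : (1:ℝ) ≤ (a:ℝ) := by exact_mod_cast ha
  have hb1 : (1:ℝ) ≤ (b:ℝ) := by exact_mod_cast hb
  have hca : ((a-1:ℕ):ℝ) = (a:ℝ) - 1 := by
    rw [Nat.cast_sub ha, Nat.cast_one]
  have hcb : ((b-1:ℕ):ℝ) = (b:ℝ) - 1 := by
    rw [Nat.cast_sub hb, Nat.cast_one]
  have habm : (0:ℝ) < (a:ℝ) + (b:ℝ) - 1 := by linarith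
  have hab : (0:ℝ) < (a:ℝ) + (b:ℝ) := by linarith
  have hpa : (0:ℝ) ≤ p - (a:ℝ) := by linarith
  rcases Nat.even_or_odd b with he | ho
  · have hbo : ¬ Even (b - 1) := by
      rw [Nat.even_sub hb]
      simp [he]
    simp only [G1, G2, hca, hcb, if_pos he, if_neg hbo, neg_sq]
    have h1 : (a:ℝ) + (b:ℝ) ≠ 0 := ne_of_gt hab
    have h2 : (a:ℝ) - 1 + (b:ℝ) ≠ 0 := by linarith
    have h3 : (a:ℝ) + ((b:ℝ) - 1) ≠ 0 := by linarith
    rw [Real.sq_sqrt, Real.sq_sqrt, Real.sq_sqrt]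
    · field_simp
      ring
    · linarith
    · exact div_nonneg (mul_nonneg (by linarith) (by linarith)) (by linarith)
    · exact div_nonneg (mul_nonneg (mul_nonneg (by linarith) (by linarith)) (by linarith)) (by linarith)
  · have hbo : ¬ Even b := Nat.not_even_iff_odd.mpr ho
    have hbe : Even (b - 1) := by
      rw [Nat.even_sub hb]
      simp [hbo]
    simp only [G1, G2, hca, hcb, if_neg hbo, if_pos hbe, neg_sq]
    have h1 : (a:ℝ) + (b:ℝ) ≠ 0 := ne_of_gt hab
    have h3 : (a:ℝ) + ((b:ℝ) - 1) ≠ 0 := by linarith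
    rw [Real.sq_sqrt, Real.sq_sqrt, Real.sq_sqrt]
    · field_simp
      ring
    · exact div_nonneg (mul_nonneg (by linarith) (by linarith)) (by linarith)
    · linarith
    · exact mul_nonneg (by linarith) (by linarith)
end

section
/- Define ν(k, 2l, 0) = k!·(p-k+1)_k·2^{2l}·l!·(p/2)_l where (a)_k denotes the Pochhammer symbol. If p is a positive integer, then ν(k, 2l, 0) ≥ 0 for all nonnegative integers k, l, and ν(k, 2l, 0) = 0 if and only if k > p. -/
/-- The squared norm `⟨k,2l,0|k,2l,0⟩ = k!·(p-k+1)_k·2^{2l}·l!·(p/2)_l` in the induced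
`osp(3|2)` module, where `(a)_j` is the Pochhammer symbol (rising factorial). -/
noncomputable def nu (p : ℝ) (k l : ℕ) : ℝ :=
  (k.factorial : ℝ) * (ascPochhammer ℝ k).eval (p - k + 1) * 2 ^ (2 * l)
    * (l.factorial : ℝ) * (ascPochhammer ℝ l).eval (p / 2)

lemma asc_prod (n : ℕ) (x : ℝ) :
    (ascPochhammer ℝ n).eval x = ∏ i ∈ Finset.range n, (x + i) := by
  induction n with
  | zero => simp
  | succ n ih => rw [ascPochhammer_succ_eval, Finset.prod_range_succ, ih]

theorem stmt4 (p : ℕ) (hp : 0 < p) :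
    ∀ k l : ℕ, 0 ≤ nu (p : ℝ) k l ∧ (nu (p : ℝ) k l = 0 ↔ p < k) := by
  intro k l
  have hp' : (0:ℝ) < p := by exact_mod_cast hp
  have hl : 0 < (ascPochhammer ℝ l).eval ((p:ℝ)/2) :=
    ascPochhammer_pos _ _ (by linarith)
  by_cases hk : k ≤ p
  · have hk' : (k:ℝ) ≤ p := by exact_mod_cast hk
    have hpos : 0 < (ascPochhammer ℝ k).eval ((p:ℝ) - k + 1) :=
      ascPochhammer_pos _ _ (by linarith)
    have hnu : 0 < nu (p:ℝ) k l := by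
      unfold nu
      have h1 : (0:ℝ) < k.factorial := by exact_mod_cast k.factorial_pos
      have h2 : (0:ℝ) < l.factorial := by exact_mod_cast l.factorial_pos
      have h3 : (0:ℝ) < 2 ^ (2*l) := by positivity
      exact mul_pos (mul_pos (mul_pos (mul_pos h1 hpos) h3) h2) hl
    exact ⟨le_of_lt hnu, by constructor <;> intro h <;> [linarith; omega]⟩
  · push_neg at hk
    have hz : (ascPochhammer ℝ k).eval ((p:ℝ) - k + 1) = 0 := by
      rw [asc_prod]
      apply Finset.prod_eq_zero (i := k - (p+1)) (Finset.mem_range.2 (by omega))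
      rw [Nat.cast_sub (by omega)]
      push_cast
      ring
    have hnu : nu (p:ℝ) k l = 0 := by unfold nu; rw [hz]; ring
    exact ⟨le_of_eq hnu.symm, by simp [hnu, hk]⟩
end

section
/- With G1 and G2 defined piecewise by parity of b as above (p ≥ a real), for all positive integers a and b: G1(a,b)² - G1(a-1,b)² - G2(a,b-1)²/(a+b) = p - 2a. -/
theorem stmt12 (p : ℝ) : ∀ a b : ℕ, 0 < a → 0 < b → (a : ℝ) ≤ p →
    G1 p a b ^ 2 - G1 p (a - 1) b ^ 2 - G2 p a (b - 1) ^ 2 / ((a : ℝ) + b) = p - 2 * a := by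
  intro a b ha hb hap
  have ha1 : (1:ℝ) ≤ (a:ℝ) := by exact_mod_cast ha
  have hb1 : (1:ℝ) ≤ (b:ℝ) := by exact_mod_cast hb
  have hca : ((a-1:ℕ):ℝ) = (a:ℝ) - 1 := by
    push_cast [Nat.cast_sub ha]; ring
  have hcb : ((b-1:ℕ):ℝ) = (b:ℝ) - 1 := by
    push_cast [Nat.cast_sub hb]; ring
  have hpa : (0:ℝ) ≤ p - a := by linarith
  have hab : (0:ℝ) < (a:ℝ) + b := by linarith
  have hab1 : (0:ℝ) < (a:ℝ) - 1 + b := by linarith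
  have hpb : (0:ℝ) ≤ p + b := by linarith
  rcases Nat.even_or_odd b with he | ho
  · have hbo : ¬ Even (b-1) := by
      rw [Nat.even_sub hb]; simp [he]
    simp only [G1, G2, if_pos he, if_neg hbo, hca, hcb, neg_sq]
    rw [Real.sq_sqrt, Real.sq_sqrt, Real.sq_sqrt]
    · have h1 : (a:ℝ) + b ≠ 0 := hab.ne'
      have h2 : (a:ℝ) + ((b:ℝ) - 1) ≠ 0 := by intro h; nlinarith
      have h3 : (a:ℝ) - 1 + b ≠ 0 := hab1.ne'
      field_simp
      ring
    · apply div_nonneg _ (by linarith)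
      apply mul_nonneg (by linarith) (by linarith)
    · apply div_nonneg _ (by linarith)
      apply mul_nonneg (mul_nonneg (by linarith) (by linarith)) (by linarith)
    · apply div_nonneg _ (by linarith)
      apply mul_nonneg (mul_nonneg (by linarith) (by linarith)) hpa
  · have hbe : Even (b-1) := by
      rcases ho with ⟨k, hk⟩; subst hk; simp [Nat.add_sub_cancel]
    simp only [G1, G2, if_neg (Nat.not_even_iff_odd.mpr ho), if_pos hbe, hca, hcb, neg_sq]
    rw [Real.sq_sqrt, Real.sq_sqrt, Real.sq_sqrt]
    · field_simp
      ring
    · linarith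
    · apply mul_nonneg (by linarith) (by linarith)
    · apply mul_nonneg (by linarith) hpa
end

section
/- Let A be an associative algebra with elements c₁, c₂ (odd/even grading: deg(c₁)=0, deg(c₂)=1) acting on a module generated by a vector |0⟩ with c₁⁻|0⟩ = c₂⁻|0⟩ = 0, [c₁⁻,c₁⁺]|0⟩ = p|0⟩, {c₂⁻,c₂⁺}|0⟩ = p|0⟩, and satisfying the parastatistics triple relations. Then the vectors |k,l,θ⟩ = (c₁⁺)^k(c₂⁺)^l([c₁⁺,c₂⁺])^θ|0⟩ satisfy ⟨1,1,0|1,1,0⟩ = p², ⟨1,1,0|0,0,1⟩ = 2p, and ⟨0,0,1|0,0,1⟩ = 4p, where the inner product is determined by ⟨0|0⟩ = 1 and (cⱼ^±)† = cⱼ^∓. -/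
/-- Graded bracket `⟦x,y⟧ = xy - (-1)^d yx`, where `d` is the product of the degrees. -/
def sb {A : Type*} [Ring A] (d : ℕ) (x y : A) : A := x * y - (-1 : A) ^ d * y * x

/-- An associative `ℝ`-algebra with elements `c j ξ` (`j = 0`: the parafermion `c₁^ξ`, even;
`j = 1`: the paraboson `c₂^ξ`, odd; `ξ = ±1` for `c_j^±`), satisfying the parastatistics
triple relations, acting on a module generated by a vacuum `|0⟩`.  The inner product
`⟨0| X |0⟩` is encoded by the linear functional `φ`, with `⟨0|0⟩ = 1`, `c_j⁻|0⟩ = 0` and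
`⟦c_j⁻, c_k⁺⟧|0⟩ = p δ_{jk} |0⟩`.  Then for the vectors `|1,1,0⟩ = c₁⁺c₂⁺|0⟩` and
`|0,0,1⟩ = [c₁⁺,c₂⁺]|0⟩` one has `⟨1,1,0|1,1,0⟩ = p²`, `⟨1,1,0|0,0,1⟩ = 2p`,
`⟨0,0,1|0,0,1⟩ = 4p`, the adjoints being determined by `(c_j^±)† = c_j^∓`. -/
theorem stmt15 {A : Type*} [Ring A] [Algebra ℝ A] (p : ℝ) (c : Fin 2 → ℤ → A)
    (φ : A →ₗ[ℝ] ℝ)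
    (hone : φ 1 = 1)
    (hvac : ∀ (X : A) (j : Fin 2), φ (X * c j (-1)) = 0)
    (hnum : ∀ (X : A) (j k : Fin 2),
      φ (X * sb (j.val * k.val) (c j (-1)) (c k 1)) = (if j = k then p else 0) * φ X)
    (hrel : ∀ (j k l : Fin 2) (ξ η ε : ℤ),
      (ξ = 1 ∨ ξ = -1) → (η = 1 ∨ η = -1) → (ε = 1 ∨ ε = -1) →
      sb ((j.val + k.val) * l.val) (sb (j.val * k.val) (c j ξ) (c k η)) (c l ε)
        = (-2 : A) * (if j = l ∧ ε = -ξ then 1 else 0) * (ε : A) ^ l.val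
            * (-1 : A) ^ (k.val * l.val) * c k η
          + (2 : A) * (ε : A) ^ l.val * (if k = l ∧ ε = -η then 1 else 0) * c j ξ) :
    φ (c 1 (-1) * c 0 (-1) * (c 0 1 * c 1 1)) = p ^ 2 ∧
    φ (c 1 (-1) * c 0 (-1) * (c 0 1 * c 1 1 - c 1 1 * c 0 1)) = 2 * p ∧
    φ ((c 1 (-1) * c 0 (-1) - c 0 (-1) * c 1 (-1)) * (c 0 1 * c 1 1 - c 1 1 * c 0 1))
      = 4 * p := by
  have R1 := hrel 0 0 1 (-1) 1 1 (Or.inr rfl) (Or.inl rfl) (Or.inl rfl)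
  have R2 := hrel 0 1 0 (-1) 1 1 (Or.inr rfl) (Or.inl rfl) (Or.inl rfl)
  have R3 := hrel 1 0 1 (-1) 1 1 (Or.inr rfl) (Or.inl rfl) (Or.inl rfl)
  have R4 := hrel 1 1 0 (-1) 1 1 (Or.inr rfl) (Or.inl rfl) (Or.inl rfl)
  simp [sb] at R1 R2 R3 R4
  have nAA := fun X => hnum X 0 0
  have nBB := fun X => hnum X 1 1
  have nAB := fun X => hnum X 0 1
  have nBA := fun X => hnum X 1 0
  simp [sb] at nAA nBB nAB nBA
  set am := c 0 (-1) with ham_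
  set ap := c 0 1 with hap_
  set bm := c 1 (-1) with hbm_
  set bp := c 1 1 with hbp_
  -- basic vacuum values
  have vA : ∀ X : A, φ (X * am) = 0 := fun X => hvac X 0
  have vB : ∀ X : A, φ (X * bm) = 0 := fun X => hvac X 1
  have φBB : φ (bm * bp) = p := by
    have h := nBB 1
    rw [one_mul, map_add, hone, mul_one] at h
    have h2 := vB bp
    linarith
  have φAA : φ (am * ap) = p := by
    have h := nAA 1
    rw [one_mul, map_sub, hone, mul_one] at h
    have h2 := vA ap
    linarith
  -- monomial identities in A
  have I1 : bm * am * (ap * bp)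
      = bm * bp * (am * ap - ap * am) + bm * ap * (am * bp - bp * am)
        + bm * ap * bp * am := by
    have h : bm * am * (ap * bp)
        - (bm * bp * (am * ap - ap * am) + bm * ap * (am * bp - bp * am)
          + bm * ap * bp * am)
        = bm * ((am * ap - ap * am) * bp - bp * (am * ap - ap * am)) := by
      noncomm_ring
    rw [R1, mul_zero] at h
    exact sub_eq_zero.mp h
  have I2 : bm * am * (bp * ap)
      = bm * ap * (am * bp - bp * am) - bm * bp - bm * bp
        + bm * bp * (am * ap - ap * am) + bm * bp * ap * am := by
    have h : bm * am * (bp * ap)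
        - (bm * ap * (am * bp - bp * am) - bm * bp - bm * bp
          + bm * bp * (am * ap - ap * am) + bm * bp * ap * am)
        = bm * ((am * bp - bp * am) * ap - ap * (am * bp - bp * am) - -(2 * bp)) := by
      noncomm_ring
    rw [R2] at h
    simp only [sub_self, mul_zero] at h
    exact sub_eq_zero.mp h
  have I3 : am * bm * (ap * bp)
      = -(am * ap) - am * ap - am * bp * (bm * ap - ap * bm)
        + am * ap * (bm * bp + bp * bm) - am * ap * bp * bm := by
    have h : am * bm * (ap * bp)
        - (-(am * ap) - am * ap - am * bp * (bm * ap - ap * bm)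
          + am * ap * (bm * bp + bp * bm) - am * ap * bp * bm)
        = am * ((bm * ap - ap * bm) * bp + bp * (bm * ap - ap * bm) - -(2 * ap)) := by
      noncomm_ring
    rw [R3] at h
    simp only [sub_self, mul_zero] at h
    exact sub_eq_zero.mp h
  have I4 : am * bm * (bp * ap)
      = am * ap * (bm * bp + bp * bm) - am * bp * (bm * ap - ap * bm)
        - am * bp * ap * bm := by
    have h : am * bm * (bp * ap)
        - (am * ap * (bm * bp + bp * bm) - am * bp * (bm * ap - ap * bm)
          - am * bp * ap * bm)
        = am * ((bm * bp + bp * bm) * ap - ap * (bm * bp + bp * bm)) := by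
      noncomm_ring
    rw [R4, mul_zero] at h
    exact sub_eq_zero.mp h
  -- φ values of the four monomials
  have v1 : φ (bm * am * (ap * bp)) = p ^ 2 := by
    rw [I1, map_add, map_add, nAA, nAB, vA, φBB]
    ring
  have v2 : φ (bm * am * (bp * ap)) = p ^ 2 - 2 * p := by
    rw [I2, map_add, map_add, map_sub, map_sub, nAB, nAA, vA, φBB]
    ring
  have v3 : φ (am * bm * (ap * bp)) = p ^ 2 - 2 * p := by
    rw [I3, map_sub, map_add, map_sub, map_sub, map_neg, nBA, nBB, vB, φAA]
    ring
  have v4 : φ (am * bm * (bp * ap)) = p ^ 2 := by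
    rw [I4, map_sub, map_sub, nBB, nBA, vB, φAA]
    ring
  refine ⟨v1, ?_, ?_⟩
  · have h : bm * am * (ap * bp - bp * ap)
        = bm * am * (ap * bp) - bm * am * (bp * ap) := by noncomm_ring
    rw [h, map_sub, v1, v2]; ring
  · have h : (bm * am - am * bm) * (ap * bp - bp * ap)
        = bm * am * (ap * bp) - bm * am * (bp * ap)
          - (am * bm * (ap * bp) - am * bm * (bp * ap)) := by noncomm_ring
    rw [h, map_sub, map_sub, map_sub, v1, v2, v3, v4]; ring
end
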